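/- arXiv:math-ph/0508030 — 2 statements merged into one kernel-verified Lean document; each statement's English description precedes it below -/
import Mathlib

section
/- Let k_F > 0, δ ∈ (0, k_F), and let f̃ : [k_F − δ, k_F + δ] → ℂ be continuously differentiable. Then the integrals ∫_{k_F−δ}^{k_F+δ} f̃(ρ)/(ρ² − (k_F + iμ)²) dρ are bounded uniformly in μ > 0: there is a constant C (depending on k_F, δ, and on sup|f̃| and sup|f̃'|) such that |∫_{k_F−δ}^{k_F+δ} f̃(ρ) dρ/(ρ² − (k_F + iμ)²)| ≤ C for all μ > 0. -/
open MeasureTheory intervalIntegral Set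

theorem uniform_bound_near_fermi_level (kF δ : ℝ) (hkF : 0 < kF) (hδ : 0 < δ)
    (hδkF : δ < kF) (f : ℝ → ℂ)
    (hf : ContDiffOn ℝ 1 f (Icc (kF - δ) (kF + δ))) :
    ∃ C : ℝ, ∀ μ : ℝ, 0 < μ →
      ‖∫ ρ in (kF - δ)..(kF + δ),
          f ρ / ((ρ : ℂ) ^ 2 - ((kF : ℂ) + μ * Complex.I) ^ 2)‖ ≤ C := by
  have hab : kF - δ ≤ kF + δ := by linarith
  have hlt : kF - δ < kF + δ := by linarith
  set S : Set ℝ := Icc (kF - δ) (kF + δ) with hSdef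
  have hS : UniqueDiffOn ℝ S := uniqueDiffOn_Icc hlt
  have hfc : ContinuousOn f S := hf.continuousOn
  obtain ⟨M, hM⟩ := isCompact_Icc.exists_bound_of_continuousOn hfc
  have hdc : ContinuousOn (derivWithin f S) S := ((hf.derivWithin hS (by norm_num) : ContDiffOn ℝ 0 (derivWithin f S) S).continuousOn)
  obtain ⟨M', hM'⟩ := isCompact_Icc.exists_bound_of_continuousOn hdc
  have hkFmem : kF ∈ S := ⟨by linarith, by linarith⟩
  have hM0 : 0 ≤ M := (norm_nonneg _).trans (hM kF hkFmem)
  have hM'0 : 0 ≤ M' := (norm_nonneg _).trans (hM' kF hkFmem)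
  refine ⟨M' / kF * (2 * δ) + M / (2 * kF) * (2 * Real.pi)
      + M / (2 * kF) * (1 / kF * (2 * δ)), fun μ hμ => ?_⟩
  set z : ℂ := (kF : ℂ) + μ * Complex.I with hzdef
  have hz_re : z.re = kF := by simp [hzdef]
  have hz_im : z.im = μ := by simp [hzdef]
  have hz0 : z ≠ 0 := by
    intro h; rw [h] at hz_im; simp at hz_im; linarith
  have hsub_im : ∀ ρ : ℝ, ((ρ : ℂ) - z).im = -μ := by
    intro ρ; simp [hz_im]
  have hsub_ne : ∀ ρ : ℝ, (ρ : ℂ) - z ≠ 0 := by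
    intro ρ h; have := hsub_im ρ; rw [h] at this; simp at this; linarith
  have hadd_im : ∀ ρ : ℝ, ((ρ : ℂ) + z).im = μ := by
    intro ρ; simp [hz_im]
  have hadd_ne : ∀ ρ : ℝ, (ρ : ℂ) + z ≠ 0 := by
    intro ρ h; have := hadd_im ρ; rw [h] at this; simp at this; linarith
  have hfact : ∀ ρ : ℝ, (ρ : ℂ) ^ 2 - z ^ 2 = ((ρ : ℂ) - z) * ((ρ : ℂ) + z) := by
    intro ρ; ring
  have hden_ne : ∀ ρ : ℝ, (ρ : ℂ) ^ 2 - z ^ 2 ≠ 0 := by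
    intro ρ; rw [hfact ρ]; exact mul_ne_zero (hsub_ne ρ) (hadd_ne ρ)
  set c : ℂ := f kF / (2 * z) with hcdef
  have key : ∀ ρ : ℝ, f ρ / ((ρ : ℂ) ^ 2 - z ^ 2)
      = (f ρ - f kF) / ((ρ : ℂ) ^ 2 - z ^ 2)
        + c * (((ρ : ℂ) - z)⁻¹ - ((ρ : ℂ) + z)⁻¹) := by
    intro ρ
    have h1 := hsub_ne ρ
    have h2 := hadd_ne ρ
    have h3 := hden_ne ρ
    rw [hcdef]
    field_simp
    ring
  -- continuity and integrability
  have hB1c : Continuous fun ρ : ℝ => ((ρ : ℂ) - z)⁻¹ :=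
    Continuous.inv₀ (Complex.continuous_ofReal.sub continuous_const) hsub_ne
  have hB2c : Continuous fun ρ : ℝ => ((ρ : ℂ) + z)⁻¹ :=
    Continuous.inv₀ (Complex.continuous_ofReal.add continuous_const) hadd_ne
  have hB1i : IntervalIntegrable (fun ρ : ℝ => ((ρ : ℂ) - z)⁻¹) volume (kF - δ) (kF + δ) :=
    hB1c.intervalIntegrable _ _
  have hB2i : IntervalIntegrable (fun ρ : ℝ => ((ρ : ℂ) + z)⁻¹) volume (kF - δ) (kF + δ) :=
    hB2c.intervalIntegrable _ _
  have hdenc : Continuous fun ρ : ℝ => (ρ : ℂ) ^ 2 - z ^ 2 :=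
    (Complex.continuous_ofReal.pow 2).sub continuous_const
  have hAc : ContinuousOn (fun ρ : ℝ => (f ρ - f kF) / ((ρ : ℂ) ^ 2 - z ^ 2)) S :=
    (hfc.sub continuousOn_const).div hdenc.continuousOn (fun ρ _ => hden_ne ρ)
  have huIcc : uIcc (kF - δ) (kF + δ) = S := uIcc_of_le hab
  have hAi : IntervalIntegrable (fun ρ : ℝ => (f ρ - f kF) / ((ρ : ℂ) ^ 2 - z ^ 2))
      volume (kF - δ) (kF + δ) := by
    apply ContinuousOn.intervalIntegrable
    rw [huIcc]; exact hAc
  -- rewrite the integral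
  rw [intervalIntegral.integral_congr (fun ρ _ => key ρ),
    intervalIntegral.integral_add hAi ((hB1i.sub hB2i).const_mul c),
    intervalIntegral.integral_const_mul, intervalIntegral.integral_sub hB1i hB2i]
  -- bound on A
  have hIoc_sub : Set.uIoc (kF - δ) (kF + δ) ⊆ S := by
    rw [uIoc_of_le hab]; exact Ioc_subset_Icc_self
  have hAbound : ∀ ρ ∈ Set.uIoc (kF - δ) (kF + δ),
      ‖(f ρ - f kF) / ((ρ : ℂ) ^ 2 - z ^ 2)‖ ≤ M' / kF := by
    intro ρ hρ
    have hρS : ρ ∈ S := hIoc_sub hρ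
    by_cases hρk : ρ = kF
    · simp [hρk]
      positivity
    · have habs : 0 < |ρ - kF| := abs_pos.mpr (sub_ne_zero.mpr hρk)
      have h1 : ‖f ρ - f kF‖ ≤ M' * |ρ - kF| := by
        have := Convex.norm_image_sub_le_of_norm_hasDerivWithin_le
          (f' := derivWithin f S)
          (fun x hx => (hf.differentiableOn one_ne_zero x hx).hasDerivWithinAt)
          hM' (convex_Icc _ _) hkFmem hρS
        simpa [Real.norm_eq_abs] using this
      have hre1 : ((ρ : ℂ) - z).re = ρ - kF := by simp [hz_re]
      have hb1 : |ρ - kF| ≤ ‖(ρ : ℂ) - z‖ := by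
        have := Complex.abs_re_le_norm ((ρ : ℂ) - z)
        rw [hre1] at this
        simpa using this
      have hre2 : ((ρ : ℂ) + z).re = ρ + kF := by simp [hz_re]
      have hb2 : kF ≤ ‖(ρ : ℂ) + z‖ := by
        have h := Complex.abs_re_le_norm ((ρ : ℂ) + z)
        rw [hre2] at h
        have : kF ≤ |ρ + kF| := by
          have hρ0 : kF - δ ≤ ρ := hρS.1
          rw [abs_of_nonneg (by linarith)]; linarith
        linarith
      have h2 : |ρ - kF| * kF ≤ ‖(ρ : ℂ) ^ 2 - z ^ 2‖ := by
        rw [hfact ρ, norm_mul]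
        exact mul_le_mul hb1 hb2 (le_of_lt hkF) (norm_nonneg _)
      rw [norm_div]
      calc ‖f ρ - f kF‖ / ‖(ρ : ℂ) ^ 2 - z ^ 2‖
          ≤ (M' * |ρ - kF|) / (|ρ - kF| * kF) := by
            apply div_le_div₀ (by positivity) h1 (by positivity) h2
        _ = M' / kF := by
            rw [mul_comm M' _, mul_div_mul_left _ _ (ne_of_gt habs)]
  have t1 : ‖∫ ρ in (kF - δ)..(kF + δ), (f ρ - f kF) / ((ρ : ℂ) ^ 2 - z ^ 2)‖
      ≤ M' / kF * (2 * δ) := by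
    have := intervalIntegral.norm_integral_le_of_norm_le_const hAbound
    have heq : |kF + δ - (kF - δ)| = 2 * δ := by
      rw [abs_of_nonneg (by linarith)]; ring
    rwa [heq] at this
  -- bound on c
  have hcnorm : ‖c‖ ≤ M / (2 * kF) := by
    rw [hcdef, norm_div, norm_mul]
    have hz_abs : kF ≤ ‖z‖ := by
      have := Complex.abs_re_le_norm z
      rw [hz_re, abs_of_pos hkF] at this
      simpa using this
    have h2z : 2 * kF ≤ ‖(2 : ℂ)‖ * ‖z‖ := by
      simp only [Complex.norm_ofNat]
      nlinarith
    exact div_le_div₀ hM0 (hM kF hkFmem) (by positivity) (by simpa using h2z)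
  -- bound on ∫ B1 via FTC with Complex.log
  have hB1int : ‖∫ ρ in (kF - δ)..(kF + δ), ((ρ : ℂ) - z)⁻¹‖ ≤ 2 * Real.pi := by
    have hderiv : ∀ ρ ∈ uIcc (kF - δ) (kF + δ),
        HasDerivAt (fun ρ : ℝ => Complex.log ((ρ : ℂ) - z)) (((ρ : ℂ) - z)⁻¹) ρ := by
      intro ρ _
      have hmem : (ρ : ℂ) - z ∈ Complex.slitPlane := by
        rw [Complex.mem_slitPlane_iff]
        right; rw [hsub_im ρ]; exact neg_ne_zero.mpr (ne_of_gt hμ)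
      have h1 : HasDerivAt (fun w : ℂ => Complex.log (w - z)) (((ρ : ℂ) - z)⁻¹) (ρ : ℂ) := by
        have := (Complex.hasDerivAt_log hmem).comp (ρ : ℂ)
          ((hasDerivAt_id ((ρ : ℂ))).sub_const z)
        simp only [mul_one] at this; exact this
      exact h1.comp_ofReal
    rw [intervalIntegral.integral_eq_sub_of_hasDerivAt hderiv hB1i]
    set a : ℂ := ((kF + δ : ℝ) : ℂ) - z with hadef
    set b : ℂ := ((kF - δ : ℝ) : ℂ) - z with hbdef
    have ha_re : a.re = δ := by simp [hadef, hz_re]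
    have ha_im : a.im = -μ := by simp [hadef, hz_im]
    have hb_re : b.re = -δ := by simp [hbdef, hz_re]
    have hb_im : b.im = -μ := by simp [hbdef, hz_im]
    have ha0 : a ≠ 0 := hsub_ne _
    have hb0 : b ≠ 0 := hsub_ne _
    have habs_eq : ‖a‖ = ‖b‖ := by
      rw [Complex.norm_def, Complex.norm_def, Complex.normSq_apply, Complex.normSq_apply,
        ha_re, ha_im, hb_re, hb_im]
      ring_nf
    have hre0 : (Complex.log a - Complex.log b).re = 0 := by
      simp [Complex.log_re, habs_eq]
    have him : (Complex.log a - Complex.log b).im = Complex.arg a - Complex.arg b := by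
      simp [Complex.log_im]
    calc ‖Complex.log a - Complex.log b‖
        ≤ |(Complex.log a - Complex.log b).re| + |(Complex.log a - Complex.log b).im| :=
          Complex.norm_le_abs_re_add_abs_im _
      _ = |Complex.arg a - Complex.arg b| := by rw [hre0, him]; simp
      _ ≤ |Complex.arg a| + |Complex.arg b| := abs_sub _ _
      _ ≤ Real.pi + Real.pi := add_le_add (Complex.abs_arg_le_pi a) (Complex.abs_arg_le_pi b)
      _ = 2 * Real.pi := by ring
  -- bound on ∫ B2
  have hB2int : ‖∫ ρ in (kF - δ)..(kF + δ), ((ρ : ℂ) + z)⁻¹‖ ≤ 1 / kF * (2 * δ) := by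
    have hbd : ∀ ρ ∈ Set.uIoc (kF - δ) (kF + δ), ‖((ρ : ℂ) + z)⁻¹‖ ≤ 1 / kF := by
      intro ρ hρ
      have hρS : ρ ∈ S := hIoc_sub hρ
      have hre2 : ((ρ : ℂ) + z).re = ρ + kF := by simp [hz_re]
      have hb2 : kF ≤ ‖(ρ : ℂ) + z‖ := by
        have h := Complex.abs_re_le_norm ((ρ : ℂ) + z)
        rw [hre2] at h
        have : kF ≤ |ρ + kF| := by
          have hρ0 : kF - δ ≤ ρ := hρS.1
          rw [abs_of_nonneg (by linarith)]; linarith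
        linarith
      rw [norm_inv, one_div]
      exact inv_anti₀ hkF hb2
    have := intervalIntegral.norm_integral_le_of_norm_le_const hbd
    have heq : |kF + δ - (kF - δ)| = 2 * δ := by
      rw [abs_of_nonneg (by linarith)]; ring
    rwa [heq] at this
  -- combine
  have hc0 : 0 ≤ M / (2 * kF) := by positivity
  have t2 : ‖c‖ * ‖∫ ρ in (kF - δ)..(kF + δ), ((ρ : ℂ) - z)⁻¹‖ ≤ M / (2 * kF) * (2 * Real.pi) :=
    mul_le_mul hcnorm hB1int (norm_nonneg _) hc0
  have t3 : ‖c‖ * ‖∫ ρ in (kF - δ)..(kF + δ), ((ρ : ℂ) + z)⁻¹‖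
      ≤ M / (2 * kF) * (1 / kF * (2 * δ)) :=
    mul_le_mul hcnorm hB2int (norm_nonneg _) hc0
  calc ‖(∫ ρ in (kF - δ)..(kF + δ), (f ρ - f kF) / ((ρ : ℂ) ^ 2 - z ^ 2))
        + c * ((∫ ρ in (kF - δ)..(kF + δ), ((ρ : ℂ) - z)⁻¹)
            - ∫ ρ in (kF - δ)..(kF + δ), ((ρ : ℂ) + z)⁻¹)‖
      ≤ ‖∫ ρ in (kF - δ)..(kF + δ), (f ρ - f kF) / ((ρ : ℂ) ^ 2 - z ^ 2)‖
        + ‖c‖ * (‖∫ ρ in (kF - δ)..(kF + δ), ((ρ : ℂ) - z)⁻¹‖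
            + ‖∫ ρ in (kF - δ)..(kF + δ), ((ρ : ℂ) + z)⁻¹‖) := by
        refine (norm_add_le _ _).trans ?_
        gcongr
        rw [norm_mul]
        gcongr
        exact norm_sub_le _ _
    _ ≤ M' / kF * (2 * δ) + M / (2 * kF) * (2 * Real.pi) + M / (2 * kF) * (1 / kF * (2 * δ)) := by
        have := mul_add ‖c‖ ‖∫ ρ in (kF - δ)..(kF + δ), ((ρ : ℂ) - z)⁻¹‖
          ‖∫ ρ in (kF - δ)..(kF + δ), ((ρ : ℂ) + z)⁻¹‖
        linarith
end

section
/- Let ℓ ≥ 0 and suppose (k, r) ↦ f_{k,ℓ}(r) is a family of solutions of the radial Schrödinger equation f'' + [k² − V(r) − ℓ(ℓ+1)/r²] f = 0 with f_{k,ℓ}(0) = 0, which is continuously differentiable in k. Then for every R > 0, (1/(2k)) [∂_k f_{k,ℓ}(R) · ∂_r f_{k,ℓ}(R) − f_{k,ℓ}(R) · ∂_k ∂_r f_{k,ℓ}(R)] = ∫_0^R |f_{k,ℓ}(r)|² dr. -/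
open MeasureTheory intervalIntegral

theorem normalization_integral_identity (ℓ : ℕ) (V : ℝ → ℝ)
    (f : ℝ → ℝ → ℝ)  -- `f k r` is the radial solution `f_{k,ℓ}(r)`
    (hsmooth : ContDiff ℝ 2 (Function.uncurry f))
    (hode : ∀ k : ℝ, 0 < k → ∀ r : ℝ, 0 < r →
      deriv (deriv (f k)) r + (k ^ 2 - V r - ℓ * (ℓ + 1) / r ^ 2) * f k r = 0)
    (h0 : ∀ k : ℝ, f k 0 = 0) :
    ∀ k : ℝ, 0 < k → ∀ R : ℝ, 0 < R →
      (1 / (2 * k)) *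
        (deriv (fun q => f q R) k * deriv (f k) R
          - f k R * deriv (fun q => deriv (f q) R) k)
        = ∫ r in (0:ℝ)..R, |f k r| ^ 2 := by
  intro k hk R hR
  set F := Function.uncurry f with hF
  have hC1 : ContDiff ℝ 1 F := hsmooth.of_le one_le_two
  have hFc : Continuous F := hsmooth.continuous
  -- each slice `f q` is C²
  have hfq : ∀ q : ℝ, ContDiff ℝ 2 (f q) := fun q =>
    hsmooth.comp (contDiff_const.prodMk contDiff_id)
  have hfq' : ∀ q : ℝ, ContDiff ℝ 1 (deriv (f q)) := by
    intro q
    have h2 : ContDiff ℝ ((1 : ℕ) + 1) (f q) := by exact_mod_cast hfq q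
    exact (contDiff_succ_iff_deriv.mp h2).2.2
  -- derivatives of slices as HasDerivAt
  have hd1 : ∀ q r : ℝ, HasDerivAt (f q) (deriv (f q) r) r := fun q r =>
    (((hfq q).differentiable two_ne_zero) r).hasDerivAt
  have hd2 : ∀ q r : ℝ, HasDerivAt (deriv (f q)) (deriv (deriv (f q)) r) r := fun q r =>
    (((hfq' q).differentiable one_ne_zero) r).hasDerivAt
  -- the parametric integral
  set I : ℝ → ℝ := fun q => ∫ r in (0:ℝ)..R, f q r * f k r with hI
  have hIcont : Continuous I := by
    apply intervalIntegral.continuous_parametric_intervalIntegral_of_continuous'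
    have : Continuous fun p : ℝ × ℝ => F p * F (k, p.2) :=
      hFc.mul (hFc.comp (continuous_const.prodMk continuous_snd))
    exact this
  -- Wronskian identity for every q > 0
  have hW : ∀ q : ℝ, 0 < q →
      f q R * deriv (f k) R - f k R * deriv (f q) R = (q ^ 2 - k ^ 2) * I q := by
    intro q hq
    set W : ℝ → ℝ := fun r => f q r * deriv (f k) r - f k r * deriv (f q) r with hWdef
    have hWc : ContinuousOn W (Set.Icc 0 R) :=
      (((hfq q).continuous.mul (hfq' k).continuous).sub
        ((hfq k).continuous.mul (hfq' q).continuous)).continuousOn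
    have hWd : ∀ r ∈ Set.Ioo (0:ℝ) R,
        HasDerivAt W ((q ^ 2 - k ^ 2) * (f q r * f k r)) r := by
      intro r hr
      have h := ((hd1 q r).mul (hd2 k r)).sub ((hd1 k r).mul (hd2 q r))
      have hodek := hode k hk r hr.1
      have hodeq := hode q hq r hr.1
      have ek : deriv (deriv (f k)) r = -((k ^ 2 - V r - ℓ * (ℓ + 1) / r ^ 2) * f k r) := by
        linarith
      have eq' : deriv (deriv (f q)) r = -((q ^ 2 - V r - ℓ * (ℓ + 1) / r ^ 2) * f q r) := by
        linarith
      refine h.congr_deriv ?_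
      rw [ek, eq']
      ring
    have hint : IntervalIntegrable (fun r => (q ^ 2 - k ^ 2) * (f q r * f k r))
        MeasureTheory.volume 0 R :=
      (continuous_const.mul ((hfq q).continuous.mul (hfq k).continuous)).intervalIntegrable _ _
    have := intervalIntegral.integral_eq_sub_of_hasDerivAt_of_le hR.le hWc hWd hint
    have hW0 : W 0 = 0 := by simp [hWdef, h0]
    rw [hW0, sub_zero] at this
    show W R = (q ^ 2 - k ^ 2) * ∫ r in (0:ℝ)..R, f q r * f k r
    rw [← intervalIntegral.integral_const_mul]
    exact this.symm
  -- identify `deriv (f q) R` with an application of the full Fréchet derivative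
  have hslice : ∀ q : ℝ, deriv (f q) R = fderiv ℝ F (q, R) ((0 : ℝ), (1 : ℝ)) := by
    intro q
    have hFd : HasFDerivAt F (fderiv ℝ F (q, R)) (q, R) :=
      (hC1.differentiable one_ne_zero (q, R)).hasFDerivAt
    have hcurve : HasDerivAt (fun r : ℝ => ((q : ℝ), r)) ((0 : ℝ), (1 : ℝ)) R :=
      (hasDerivAt_const R q).prodMk (hasDerivAt_id R)
    have := hFd.comp_hasDerivAt R hcurve
    exact this.deriv
  -- differentiability in q of `q ↦ deriv (f q) R`
  have hBdiff : DifferentiableAt ℝ (fun q => deriv (f q) R) k := by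
    have hfd : ContDiff ℝ 1 (fderiv ℝ F) := hsmooth.fderiv_right (by norm_num)
    have h1 : ContDiff ℝ 1 (fun q : ℝ => fderiv ℝ F (q, R)) :=
      hfd.comp (contDiff_id.prodMk contDiff_const)
    have h2 : ContDiff ℝ 1 (fun q : ℝ => fderiv ℝ F (q, R) ((0:ℝ), (1:ℝ))) :=
      h1.clm_apply contDiff_const
    have := (h2.differentiable one_ne_zero) k
    refine this.congr_of_eventuallyEq ?_
    filter_upwards with q
    rw [hslice q]
  have hAdiff : DifferentiableAt ℝ (fun q => f q R) k := by
    have : ContDiff ℝ 1 (fun q : ℝ => F (q, R)) :=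
      hC1.comp (contDiff_id.prodMk contDiff_const)
    exact (this.differentiable one_ne_zero) k
  -- derivative of the quadratic-factor term at k
  have hCder : HasDerivAt (fun q => (q ^ 2 - k ^ 2) * I q) (2 * k * I k) k := by
    rw [hasDerivAt_iff_tendsto_slope]
    have htt : Filter.Tendsto (fun q => (q + k) * I q) (nhdsWithin k {k}ᶜ)
        (nhds (2 * k * I k)) := by
      have : Filter.Tendsto (fun q => (q + k) * I q) (nhds k) (nhds ((k + k) * I k)) :=
        ((continuous_id.add continuous_const).mul hIcont).continuousAt
      rw [show (k + k) = 2 * k by ring] at this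
      exact this.mono_left nhdsWithin_le_nhds
    refine htt.congr' ?_
    filter_upwards [self_mem_nhdsWithin] with q hq
    have hqk : q - k ≠ 0 := sub_ne_zero.mpr hq
    simp only [slope_def_field]
    field_simp
    ring
  -- the function G is identically 0 near k
  set G : ℝ → ℝ := fun q =>
    f q R * deriv (f k) R - f k R * deriv (f q) R - (q ^ 2 - k ^ 2) * I q with hG
  have hGz : G =ᶠ[nhds k] (fun _ => (0 : ℝ)) := by
    filter_upwards [IsOpen.mem_nhds isOpen_Ioi hk] with q hq
    simp only [hG]
    rw [hW q hq]
    ring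
  have hGd : HasDerivAt G
      (deriv (fun q => f q R) k * deriv (f k) R
        - f k R * deriv (fun q => deriv (f q) R) k - 2 * k * I k) k := by
    exact ((((hAdiff.hasDerivAt).mul_const (deriv (f k) R)).sub
      ((hBdiff.hasDerivAt).const_mul (f k R))).sub hCder)
  have hGd0 : HasDerivAt G 0 k :=
    (hasDerivAt_const k (0 : ℝ)).congr_of_eventuallyEq hGz
  have hkey : deriv (fun q => f q R) k * deriv (f k) R
      - f k R * deriv (fun q => deriv (f q) R) k = 2 * k * I k := by
    have := hGd.unique hGd0
    linarith
  rw [hkey]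
  have hIk : I k = ∫ r in (0:ℝ)..R, |f k r| ^ 2 := by
    apply intervalIntegral.integral_congr
    intro r _
    simp [sq_abs, sq]
  rw [hIk]
  field_simp
end
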